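/- The π/2-twisted basis measurement satisfies the one-ebit localizability condition: for every b ∈ {X,Y,Z}, the matrix M_tw†·(I₂⊗σ_b)·M_tw is a permutation matrix with phases. -/

import Mathlib

open Matrix Complex Kronecker

noncomputable section

/-- The identification of `Fin 2 × Fin 2` with `Fin 4`, ordering pairs as 00,01,10,11. -/
def pairEquiv : Fin 2 × Fin 2 ≃ Fin 4 where
  toFun p := ⟨2 * p.1.val + p.2.val, by have h1 := p.1.isLt; have h2 := p.2.isLt; omega⟩
  invFun k := (⟨k.val / 2, by have := k.isLt; omega⟩, ⟨k.val % 2, by omega⟩)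
  left_inv := by decide
  right_inv := by decide

/-- Kronecker product of two 2×2 matrices, as a 4×4 matrix indexed by `Fin 4`
with the ordering 00,01,10,11. -/
def kron (A B : Matrix (Fin 2) (Fin 2) ℂ) : Matrix (Fin 4) (Fin 4) ℂ :=
  Matrix.reindex pairEquiv pairEquiv (A ⊗ₖ B)

def σX : Matrix (Fin 2) (Fin 2) ℂ := !![0, 1; 1, 0]
def σY : Matrix (Fin 2) (Fin 2) ℂ := !![0, -Complex.I; Complex.I, 0]
def σZ : Matrix (Fin 2) (Fin 2) ℂ := !![1, 0; 0, -1]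

/-- The Pauli matrices indexed as σ₀ = I₂, σ₁ = σ_X, σ₂ = σ_Y, σ₃ = σ_Z. -/
def pauli (a : Fin 4) : Matrix (Fin 2) (Fin 2) ℂ :=
  if a = 0 then 1 else if a = 1 then σX else if a = 2 then σY else σZ

/-- A 4×4 complex matrix is a permutation matrix with phases if there is a permutation
`π` of the indices and unit-modulus phases `φ j` with `P (π j) j = φ j` and all other
entries zero. -/
def PermPhase (P : Matrix (Fin 4) (Fin 4) ℂ) : Prop :=
  ∃ (π : Equiv.Perm (Fin 4)) (φ : Fin 4 → ℂ),
    (∀ j, ‖φ j‖ = 1) ∧ ∀ i j, P i j = if i = π j then φ j else 0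

/-- `M` satisfies the one-ebit localizability condition. -/
def OneEbitLocal (M : Matrix (Fin 4) (Fin 4) ℂ) : Prop :=
  ∀ b ∈ ({σX, σY, σZ} : Set (Matrix (Fin 2) (Fin 2) ℂ)),
    PermPhase (Mᴴ * kron 1 b * M)

/-- The π/2-twisted basis measurement. -/
def M_tw : Matrix (Fin 4) (Fin 4) ℂ :=
  !![1,0,0,0; 0,1,0,0;
     0,0,((Real.sqrt 2 : ℂ))⁻¹,((Real.sqrt 2 : ℂ))⁻¹;
     0,0,((Real.sqrt 2 : ℂ))⁻¹,-((Real.sqrt 2 : ℂ))⁻¹]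

lemma hs : ((Real.sqrt 2 : ℂ))⁻¹ * ((Real.sqrt 2 : ℂ))⁻¹ = (2:ℂ)⁻¹ := by
  rw [← mul_inv]
  norm_cast
  rw [Real.mul_self_sqrt (by norm_num : (0:ℝ) ≤ 2)]; push_cast; ring

lemma hs2 : ((Real.sqrt 2 : ℂ)) ^ 2 = 2 := by
  norm_cast
  rw [sq, Real.mul_self_sqrt (by norm_num : (0:ℝ) ≤ 2)]

lemma hs' : ((Real.sqrt 2 : ℂ))⁻¹ ^ 2 = (2:ℂ)⁻¹ := by rw [sq]; exact hs

lemma kron_one (b : Matrix (Fin 2) (Fin 2) ℂ) :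
    kron 1 b = !![b 0 0, b 0 1, 0, 0; b 1 0, b 1 1, 0, 0;
                  0, 0, b 0 0, b 0 1; 0, 0, b 1 0, b 1 1] := by
  ext i j
  fin_cases i <;> fin_cases j <;>
    simp [kron, pairEquiv, Matrix.one_apply, Fin.ext_iff,
      show ((3:Fin 4):ℕ) = 3 from rfl, show ((2:Fin 4):ℕ) = 2 from rfl,
      Matrix.vecHead, Matrix.vecTail]

set_option maxHeartbeats 1000000 in
lemma prodX : M_twᴴ * kron 1 σX * M_tw = !![0,1,0,0; 1,0,0,0; 0,0,1,0; 0,0,0,-1] := by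
  ext i j
  fin_cases i <;> fin_cases j <;>
    simp [Matrix.mul_apply, Fin.sum_univ_four, M_tw, kron_one, σX,
      Matrix.conjTranspose_apply, Complex.star_def, map_inv₀, Complex.conj_ofReal,
      Matrix.vecHead, Matrix.vecTail, hs] <;>
    ring_nf <;> simp [hs, hs']

set_option maxHeartbeats 1000000 in
lemma prodY : M_twᴴ * kron 1 σY * M_tw =
    !![0,-Complex.I,0,0; Complex.I,0,0,0; 0,0,0,Complex.I; 0,0,-Complex.I,0] := by
  ext i j
  fin_cases i <;> fin_cases j <;>
    simp [Matrix.mul_apply, Fin.sum_univ_four, M_tw, kron_one, σY,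
      Matrix.conjTranspose_apply, Complex.star_def, map_inv₀, Complex.conj_ofReal,
      Matrix.vecHead, Matrix.vecTail, hs] <;>
    ring_nf <;> simp [hs, hs', hs2] <;> ring_nf

set_option maxHeartbeats 1000000 in
lemma prodZ : M_twᴴ * kron 1 σZ * M_tw = !![1,0,0,0; 0,-1,0,0; 0,0,0,1; 0,0,1,0] := by
  ext i j
  fin_cases i <;> fin_cases j <;>
    simp [Matrix.mul_apply, Fin.sum_univ_four, M_tw, kron_one, σZ,
      Matrix.conjTranspose_apply, Complex.star_def, map_inv₀, Complex.conj_ofReal,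
      Matrix.vecHead, Matrix.vecTail, hs] <;>
    ring_nf <;> simp [hs, hs']

/-- The π/2-twisted basis measurement satisfies the one-ebit localizability condition. -/
theorem tw_one_ebit_condition : OneEbitLocal M_tw := by
  intro b hb
  simp only [Set.mem_insert_iff, Set.mem_singleton_iff] at hb
  rcases hb with rfl | rfl | rfl
  · refine ⟨Equiv.swap 0 1, ![1, 1, 1, -1], ?_, ?_⟩
    · intro j; fin_cases j <;> simp
    · intro i j
      rw [prodX]
      fin_cases i <;> fin_cases j <;>
        simp [Equiv.swap_apply_def, Matrix.vecHead, Matrix.vecTail]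
  · refine ⟨(Equiv.swap 0 1).trans (Equiv.swap 2 3),
      ![Complex.I, -Complex.I, -Complex.I, Complex.I], ?_, ?_⟩
    · intro j; fin_cases j <;> simp
    · intro i j
      rw [prodY]
      fin_cases i <;> fin_cases j <;>
        simp [Equiv.swap_apply_def, Matrix.vecHead, Matrix.vecTail]
  · refine ⟨Equiv.swap 2 3, ![1, -1, 1, 1], ?_, ?_⟩
    · intro j; fin_cases j <;> simp
    · intro i j
      rw [prodZ]
      fin_cases i <;> fin_cases j <;>
        simp [Equiv.swap_apply_def, Matrix.vecHead, Matrix.vecTail]
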